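/- For real numbers l, σ, a, b with 0 < σ < b ≤ a and a − σ < l ≤ L̂, where L̂ := √((a−σ)² + (b−σ)²), the spherocylinder intersection probability P(l,σ,a,b) equals (1/π)·(L̂² + l²)/(ab) − (2/π)·[((b−σ)/b)·(l/a)·√(1 − (a−σ)²/l²) + ((a−σ)/a)·(l/b)·√(1 − (b−σ)²/l²)] + (2/π)·((a−σ)/a)·((b−σ)/b)·(π − arcsin((a−σ)/l) − arcsin((b−σ)/l)) + (σ/a + σ/b − σ²/(ab)). -/

import Mathlib

open Real MeasureTheory Filter

/-- `A(l,a) = ∫_0^π min(a, l·|cos φ|) dφ` -/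
noncomputable def A2 (l a : ℝ) : ℝ := ∫ φ in (0:ℝ)..π, min a (l * |Real.cos φ|)

/-- `B(l,b) = ∫_0^π min(b, l·sin φ) dφ` -/
noncomputable def B2 (l b : ℝ) : ℝ := ∫ φ in (0:ℝ)..π, min b (l * Real.sin φ)

/-- `AB(l,a,b) = ∫_0^π min(a, l·|cos φ|)·min(b, l·sin φ) dφ` -/
noncomputable def AB2 (l a b : ℝ) : ℝ :=
  ∫ φ in (0:ℝ)..π, min a (l * |Real.cos φ|) * min b (l * Real.sin φ)

/-- Intersection probability for the 2D Buffon–Laplace needle problem. -/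
noncomputable def P2 (l a b : ℝ) : ℝ :=
  (b * A2 l a + a * B2 l b - AB2 l a b) / (π * a * b)

/-- Intersection probability for the 2D spherocylinder Buffon–Laplace problem. -/
noncomputable def P2sc (l σ a b : ℝ) : ℝ :=
  ((b - σ) * A2 l (a - σ) + (a - σ) * B2 l (b - σ) - AB2 l (a - σ) (b - σ)
    + (σ * a + σ * b - σ ^ 2) * π) / (π * a * b)

/-- `A³ᴰ(l,a) = ∫_0^{π/2} ∫_0^π min(a, l·sin ψ·|cos φ|) dφ dψ` -/
noncomputable def A3 (l a : ℝ) : ℝ :=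
  ∫ ψ in (0:ℝ)..(π/2), ∫ φ in (0:ℝ)..π, min a (l * Real.sin ψ * |Real.cos φ|)

/-- `B³ᴰ(l,b) = ∫_0^{π/2} ∫_0^π min(b, l·sin ψ·sin φ) dφ dψ` -/
noncomputable def B3 (l b : ℝ) : ℝ :=
  ∫ ψ in (0:ℝ)..(π/2), ∫ φ in (0:ℝ)..π, min b (l * Real.sin ψ * Real.sin φ)

/-- `AB³ᴰ(l,a,b) = ∫_0^{π/2} ∫_0^π min(a, l·sin ψ·|cos φ|)·min(b, l·sin ψ·sin φ) dφ dψ` -/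
noncomputable def AB3 (l a b : ℝ) : ℝ :=
  ∫ ψ in (0:ℝ)..(π/2), ∫ φ in (0:ℝ)..π,
    min a (l * Real.sin ψ * |Real.cos φ|) * min b (l * Real.sin ψ * Real.sin φ)

/-- `S³ᴰ(l,a,b) = b·A³ᴰ(l,a) + a·B³ᴰ(l,b) − AB³ᴰ(l,a,b)` -/
noncomputable def S3 (l a b : ℝ) : ℝ := b * A3 l a + a * B3 l b - AB3 l a b

/-- `F(α,β,t) = ∫_α^β √(sin²ψ − t²) dψ` -/
noncomputable def Faux (α β t : ℝ) : ℝ :=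
  ∫ ψ in α..β, Real.sqrt (Real.sin ψ ^ 2 - t ^ 2)

/-- `G(α,β,t) = ∫_α^β (π/2 − arcsin(t / sin ψ)) dψ` -/
noncomputable def Gaux (α β t : ℝ) : ℝ :=
  ∫ ψ in α..β, (π / 2 - Real.arcsin (t / Real.sin ψ))

set_option maxHeartbeats 1000000
open intervalIntegral in
lemma A2_val {l a : ℝ} (ha : 0 < a) (hal : a < l) :
    A2 l a = 2 * a * Real.arccos (a / l) + 2 * l - 2 * Real.sqrt (l ^ 2 - a ^ 2) := by
  have hl : 0 < l := ha.trans hal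
  set θ := Real.arccos (a / l) with hθdef
  have hx0 : 0 < a / l := div_pos ha hl
  have hx1 : a / l < 1 := (div_lt_one hl).2 hal
  have hθpos : 0 < θ := Real.arccos_pos.2 hx1
  have hθlt : θ < π / 2 := Real.arccos_lt_pi_div_two.2 hx0
  have hcosθ : Real.cos θ = a / l := Real.cos_arccos (by linarith) (by linarith)
  have hπ : (0:ℝ) < π := Real.pi_pos
  have hcont : Continuous fun φ => min a (l * |Real.cos φ|) :=
    continuous_const.min (continuous_const.mul Real.continuous_cos.abs)
  have hii : ∀ u v : ℝ, IntervalIntegrable (fun φ => min a (l * |Real.cos φ|))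
      MeasureTheory.volume u v := fun u v => hcont.intervalIntegrable u v
  have hsplit : A2 l a
      = (∫ φ in (0:ℝ)..θ, min a (l * |Real.cos φ|))
      + (∫ φ in θ..(π/2), min a (l * |Real.cos φ|))
      + (∫ φ in (π/2)..(π - θ), min a (l * |Real.cos φ|))
      + (∫ φ in (π - θ)..π, min a (l * |Real.cos φ|)) := by
    rw [A2]
    rw [← integral_add_adjacent_intervals (hii 0 θ) (hii θ π), ← integral_add_adjacent_intervals (hii θ (π/2)) (hii (π/2) π),
      ← integral_add_adjacent_intervals (hii (π/2) (π - θ)) (hii (π - θ) π)]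
    ring
  have hP1 : (∫ φ in (0:ℝ)..θ, min a (l * |Real.cos φ|)) = a * θ := by
    rw [integral_congr (g := fun _ => a), intervalIntegral.integral_const, smul_eq_mul]
    · ring
    · intro φ hφ
      rw [Set.uIcc_of_le hθpos.le] at hφ
      have h1 : Real.cos θ ≤ Real.cos φ :=
        Real.cos_le_cos_of_nonneg_of_le_pi hφ.1 (by linarith) hφ.2
      have h2 : 0 < Real.cos φ := by rw [hcosθ] at h1; linarith
      simp only
      have h1' : a / l ≤ Real.cos φ := hcosθ ▸ h1
      have h3 := (div_le_iff₀ hl).1 h1'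
      rw [abs_of_pos h2, min_eq_left]
      nlinarith
  have hP2 : (∫ φ in θ..(π/2), min a (l * |Real.cos φ|)) = l * (1 - Real.sin θ) := by
    rw [integral_congr (g := fun φ => l * Real.cos φ)]
    · rw [intervalIntegral.integral_const_mul, integral_cos, Real.sin_pi_div_two]
    · intro φ hφ
      rw [Set.uIcc_of_le hθlt.le] at hφ
      have h0 : 0 ≤ Real.cos φ := Real.cos_nonneg_of_mem_Icc ⟨by linarith [hφ.1], hφ.2⟩
      have h1 : Real.cos φ ≤ Real.cos θ :=
        Real.cos_le_cos_of_nonneg_of_le_pi hθpos.le (by linarith [hφ.2]) hφ.1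
      simp only
      have h1' : Real.cos φ ≤ a / l := hcosθ ▸ h1
      have h2 := (le_div_iff₀ hl).1 h1'
      rw [abs_of_nonneg h0, min_eq_right]
      nlinarith
  have hP3 : (∫ φ in (π/2)..(π - θ), min a (l * |Real.cos φ|)) = l * (1 - Real.sin θ) := by
    have hle : π / 2 ≤ π - θ := by linarith
    rw [integral_congr (g := fun φ => l * -Real.cos φ)]
    · simp only [intervalIntegral.integral_const_mul]
      rw [intervalIntegral.integral_neg, integral_cos, Real.sin_pi_div_two, Real.sin_pi_sub]
      ring
    · intro φ hφ
      rw [Set.uIcc_of_le hle] at hφ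
      have h0 : Real.cos φ ≤ 0 := by
        have := Real.cos_le_cos_of_nonneg_of_le_pi (by positivity) (by linarith [hφ.2]) hφ.1
        simpa using this
      have h1 : Real.cos (π - θ) ≤ Real.cos φ :=
        Real.cos_le_cos_of_nonneg_of_le_pi (by linarith [hφ.1]) (by linarith) hφ.2
      rw [Real.cos_pi_sub, hcosθ] at h1
      simp only
      have h2 := (le_div_iff₀ hl).1 (neg_le.1 h1)
      rw [abs_of_nonpos h0, min_eq_right]
      nlinarith
  have hP4 : (∫ φ in (π - θ)..π, min a (l * |Real.cos φ|)) = a * θ := by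
    rw [integral_congr (g := fun _ => a), intervalIntegral.integral_const, smul_eq_mul]
    · ring
    · intro φ hφ
      rw [Set.uIcc_of_le (by linarith : π - θ ≤ π)] at hφ
      have h1 : Real.cos φ ≤ Real.cos (π - θ) :=
        Real.cos_le_cos_of_nonneg_of_le_pi (by linarith) hφ.2 hφ.1
      rw [Real.cos_pi_sub, hcosθ] at h1
      have h0 : Real.cos φ ≤ 0 := by nlinarith
      simp only
      have h2 := (div_le_iff₀ hl).1 (le_neg.1 h1)
      rw [abs_of_nonpos h0, min_eq_left]
      nlinarith
  have hsin : l * Real.sin θ = Real.sqrt (l ^ 2 - a ^ 2) := by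
    rw [hθdef, Real.sin_arccos]
    rw [show (1 : ℝ) - (a/l)^2 = (l^2 - a^2) / l^2 by field_simp]
    rw [Real.sqrt_div (by nlinarith) (l^2), Real.sqrt_sq hl.le]
    field_simp
  rw [hsplit, hP1, hP2, hP3, hP4]
  nlinarith [hsin]

open intervalIntegral in
lemma B2_val {l b : ℝ} (hb : 0 < b) (hbl : b < l) :
    B2 l b = 2 * l - 2 * Real.sqrt (l ^ 2 - b ^ 2) + b * (π - 2 * Real.arcsin (b / l)) := by
  have hl : 0 < l := hb.trans hbl
  set θ := Real.arcsin (b / l) with hθdef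
  have hx0 : 0 < b / l := div_pos hb hl
  have hx1 : b / l < 1 := (div_lt_one hl).2 hbl
  have hθpos : 0 < θ := Real.arcsin_pos.2 hx0
  have hθlt : θ < π / 2 := Real.arcsin_lt_pi_div_two.2 hx1
  have hsinθ : Real.sin θ = b / l := Real.sin_arcsin (by linarith) (by linarith)
  have hπ : (0:ℝ) < π := Real.pi_pos
  have hcont : Continuous fun φ => min b (l * Real.sin φ) :=
    continuous_const.min (continuous_const.mul Real.continuous_sin)
  have hii : ∀ u v : ℝ, IntervalIntegrable (fun φ => min b (l * Real.sin φ))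
      MeasureTheory.volume u v := fun u v => hcont.intervalIntegrable u v
  have hsplit : B2 l b
      = (∫ φ in (0:ℝ)..θ, min b (l * Real.sin φ))
      + (∫ φ in θ..(π - θ), min b (l * Real.sin φ))
      + (∫ φ in (π - θ)..π, min b (l * Real.sin φ)) := by
    rw [B2, ← integral_add_adjacent_intervals (hii 0 θ) (hii θ π),
      ← integral_add_adjacent_intervals (hii θ (π - θ)) (hii (π - θ) π)]
    ring
  have hP1 : (∫ φ in (0:ℝ)..θ, min b (l * Real.sin φ)) = l * (1 - Real.cos θ) := by
    rw [integral_congr (g := fun φ => l * Real.sin φ)]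
    · rw [intervalIntegral.integral_const_mul, integral_sin, Real.cos_zero]
    · intro φ hφ
      rw [Set.uIcc_of_le hθpos.le] at hφ
      have h1 : Real.sin φ ≤ Real.sin θ :=
        Real.sin_le_sin_of_le_of_le_pi_div_two (by linarith [hφ.1]) hθlt.le hφ.2
      rw [hsinθ] at h1
      have h2 := (le_div_iff₀ hl).1 h1
      simp only
      rw [min_eq_right]
      nlinarith
  have hP2 : (∫ φ in θ..(π - θ), min b (l * Real.sin φ)) = b * (π - 2 * θ) := by
    rw [integral_congr (g := fun _ => b), intervalIntegral.integral_const, smul_eq_mul]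
    · ring
    · intro φ hφ
      rw [Set.uIcc_of_le (by linarith : θ ≤ π - θ)] at hφ
      have h1 : Real.sin θ ≤ Real.sin φ := by
        rcases le_total φ (π / 2) with h | h
        · exact Real.sin_le_sin_of_le_of_le_pi_div_two (by linarith) h hφ.1
        · rw [← Real.sin_pi_sub φ]
          exact Real.sin_le_sin_of_le_of_le_pi_div_two (by linarith) (by linarith)
            (by linarith [hφ.2])
      rw [hsinθ] at h1
      have h2 := (div_le_iff₀ hl).1 h1
      simp only
      rw [min_eq_left]
      nlinarith
  have hP3 : (∫ φ in (π - θ)..π, min b (l * Real.sin φ)) = l * (1 - Real.cos θ) := by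
    rw [integral_congr (g := fun φ => l * Real.sin φ)]
    · rw [intervalIntegral.integral_const_mul, integral_sin, Real.cos_pi_sub, Real.cos_pi]
      ring
    · intro φ hφ
      rw [Set.uIcc_of_le (by linarith : π - θ ≤ π)] at hφ
      have h1 : Real.sin φ ≤ Real.sin θ := by
        rw [← Real.sin_pi_sub φ]
        exact Real.sin_le_sin_of_le_of_le_pi_div_two (by linarith [hφ.2]) hθlt.le
          (by linarith [hφ.1])
      rw [hsinθ] at h1
      have h2 := (le_div_iff₀ hl).1 h1
      simp only
      rw [min_eq_right]
      nlinarith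
  have hcos : l * Real.cos θ = Real.sqrt (l ^ 2 - b ^ 2) := by
    rw [hθdef, Real.cos_arcsin]
    rw [show (1 : ℝ) - (b/l)^2 = (l^2 - b^2) / l^2 by field_simp]
    rw [Real.sqrt_div (by nlinarith) (l^2), Real.sqrt_sq hl.le]
    field_simp
  rw [hsplit, hP1, hP2, hP3]
  nlinarith [hcos]

open intervalIntegral in
lemma AB2_val {l a b : ℝ} (hb : 0 < b) (hba : b ≤ a) (hal : a < l)
    (hl2 : l ^ 2 ≤ a ^ 2 + b ^ 2) :
    AB2 l a b = 2 * l * (a + b) - a ^ 2 - b ^ 2 - l ^ 2 := by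
  have ha : 0 < a := hb.trans_le hba
  have hl : 0 < l := ha.trans hal
  have hbl : b < l := lt_of_le_of_lt hba hal
  set α := Real.arccos (a / l) with hαdef
  set β := Real.arcsin (b / l) with hβdef
  have hxa0 : 0 < a / l := div_pos ha hl
  have hxa1 : a / l < 1 := (div_lt_one hl).2 hal
  have hxb0 : 0 < b / l := div_pos hb hl
  have hxb1 : b / l < 1 := (div_lt_one hl).2 hbl
  have hαpos : 0 < α := Real.arccos_pos.2 hxa1
  have hαlt : α < π / 2 := Real.arccos_lt_pi_div_two.2 hxa0
  have hβpos : 0 < β := Real.arcsin_pos.2 hxb0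
  have hβlt : β < π / 2 := Real.arcsin_lt_pi_div_two.2 hxb1
  have hcosα : Real.cos α = a / l := Real.cos_arccos (by linarith) (by linarith)
  have hsinβ : Real.sin β = b / l := Real.sin_arcsin (by linarith) (by linarith)
  have hsinα_sq : Real.sin α ^ 2 = 1 - (a / l) ^ 2 := by
    have := Real.sin_sq_add_cos_sq α; rw [hcosα] at this; linarith
  have hsinα_nonneg : 0 ≤ Real.sin α := Real.sin_nonneg_of_nonneg_of_le_pi hαpos.le
    (by linarith [Real.pi_pos])
  -- sin α ≤ b / l
  have hkey : (a / l) ^ 2 + (b / l) ^ 2 = (a ^ 2 + b ^ 2) / l ^ 2 := by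
    field_simp
  have hone : (1:ℝ) ≤ (a ^ 2 + b ^ 2) / l ^ 2 := (one_le_div (by positivity)).2 hl2
  have hsab : Real.sin α ≤ b / l := by
    have hsq : Real.sin α ^ 2 ≤ (b / l) ^ 2 := by rw [hsinα_sq]; linarith
    nlinarith [hsq, hsinα_nonneg, hxb0]
  -- cos β ≤ a / l
  have hcosβ_sq : Real.cos β ^ 2 = 1 - (b / l) ^ 2 := by
    have := Real.sin_sq_add_cos_sq β; rw [hsinβ] at this; linarith
  have hcosβ_nonneg : 0 ≤ Real.cos β := Real.cos_nonneg_of_mem_Icc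
    ⟨by linarith, hβlt.le⟩
  have hcba : Real.cos β ≤ a / l := by
    have hsq : Real.cos β ^ 2 ≤ (a / l) ^ 2 := by rw [hcosβ_sq]; linarith
    nlinarith [hsq, hcosβ_nonneg, hxa0]
  -- α ≤ β
  have hαβ : α ≤ β := by
    have h1 : Real.arcsin (Real.sin α) = α := Real.arcsin_sin (by linarith) (by linarith)
    calc α = Real.arcsin (Real.sin α) := h1.symm
    _ ≤ β := Real.monotone_arcsin hsab
  have hπ : (0:ℝ) < π := Real.pi_pos
  have hcont : Continuous fun φ => min a (l * |Real.cos φ|) * min b (l * Real.sin φ) :=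
    (continuous_const.min (continuous_const.mul Real.continuous_cos.abs)).mul
      (continuous_const.min (continuous_const.mul Real.continuous_sin))
  have hii : ∀ u v : ℝ, IntervalIntegrable
      (fun φ => min a (l * |Real.cos φ|) * min b (l * Real.sin φ))
      MeasureTheory.volume u v := fun u v => hcont.intervalIntegrable u v
  have hsplit : AB2 l a b
      = (∫ φ in (0:ℝ)..α, min a (l * |Real.cos φ|) * min b (l * Real.sin φ))
      + (∫ φ in α..β, min a (l * |Real.cos φ|) * min b (l * Real.sin φ))
      + (∫ φ in β..(π/2), min a (l * |Real.cos φ|) * min b (l * Real.sin φ))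
      + (∫ φ in (π/2)..(π - β), min a (l * |Real.cos φ|) * min b (l * Real.sin φ))
      + (∫ φ in (π - β)..(π - α), min a (l * |Real.cos φ|) * min b (l * Real.sin φ))
      + (∫ φ in (π - α)..π, min a (l * |Real.cos φ|) * min b (l * Real.sin φ)) := by
    rw [AB2,
      ← integral_add_adjacent_intervals (hii 0 α) (hii α π),
      ← integral_add_adjacent_intervals (hii α β) (hii β π),
      ← integral_add_adjacent_intervals (hii β (π/2)) (hii (π/2) π),
      ← integral_add_adjacent_intervals (hii (π/2) (π - β)) (hii (π - β) π),
      ← integral_add_adjacent_intervals (hii (π - β) (π - α)) (hii (π - α) π)]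
    ring
  have hP1 : (∫ φ in (0:ℝ)..α, min a (l * |Real.cos φ|) * min b (l * Real.sin φ))
      = a * l * (1 - Real.cos α) := by
    rw [integral_congr (g := fun φ => (a * l) * Real.sin φ)]
    · rw [intervalIntegral.integral_const_mul, integral_sin, Real.cos_zero]
    · intro φ hφ
      rw [Set.uIcc_of_le hαpos.le] at hφ
      have h1 : Real.cos α ≤ Real.cos φ :=
        Real.cos_le_cos_of_nonneg_of_le_pi hφ.1 (by linarith) hφ.2
      have h1' : a / l ≤ Real.cos φ := hcosα ▸ h1
      have h2 : 0 < Real.cos φ := lt_of_lt_of_le hxa0 h1'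
      have h3 := (div_le_iff₀ hl).1 h1'
      have h4 : Real.sin φ ≤ Real.sin α :=
        Real.sin_le_sin_of_le_of_le_pi_div_two (by linarith [hφ.1]) hαlt.le hφ.2
      have h5 : Real.sin φ ≤ b / l := h4.trans hsab
      have h6 := (le_div_iff₀ hl).1 h5
      simp only
      rw [abs_of_pos h2, min_eq_left (by linarith), min_eq_right (by linarith)]
      ring
  have hP2 : (∫ φ in α..β, min a (l * |Real.cos φ|) * min b (l * Real.sin φ))
      = l ^ 2 * ((Real.sin β ^ 2 - Real.sin α ^ 2) / 2) := by
    rw [integral_congr (g := fun φ => l ^ 2 * (Real.sin φ * Real.cos φ))]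
    · rw [intervalIntegral.integral_const_mul, integral_sin_mul_cos₁]
    · intro φ hφ
      rw [Set.uIcc_of_le hαβ] at hφ
      have h0 : 0 ≤ Real.cos φ := Real.cos_nonneg_of_mem_Icc
        ⟨by linarith [hφ.1], by linarith [hφ.2]⟩
      have h1 : Real.cos φ ≤ Real.cos α :=
        Real.cos_le_cos_of_nonneg_of_le_pi hαpos.le (by linarith [hφ.2]) hφ.1
      have h1' : Real.cos φ ≤ a / l := hcosα ▸ h1
      have h2 := (le_div_iff₀ hl).1 h1'
      have h3 : Real.sin φ ≤ Real.sin β :=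
        Real.sin_le_sin_of_le_of_le_pi_div_two (by linarith [hφ.1, hαpos]) hβlt.le hφ.2
      have h3' : Real.sin φ ≤ b / l := hsinβ ▸ h3
      have h4 := (le_div_iff₀ hl).1 h3'
      simp only
      rw [abs_of_nonneg h0, min_eq_right (by linarith), min_eq_right (by linarith)]
      ring
  have hP3 : (∫ φ in β..(π/2), min a (l * |Real.cos φ|) * min b (l * Real.sin φ))
      = b * l * (1 - Real.sin β) := by
    rw [integral_congr (g := fun φ => (b * l) * Real.cos φ)]
    · rw [intervalIntegral.integral_const_mul, integral_cos, Real.sin_pi_div_two]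
    · intro φ hφ
      rw [Set.uIcc_of_le hβlt.le] at hφ
      have h0 : 0 ≤ Real.cos φ := Real.cos_nonneg_of_mem_Icc
        ⟨by linarith [hφ.1], hφ.2⟩
      have h1 : Real.cos φ ≤ Real.cos β :=
        Real.cos_le_cos_of_nonneg_of_le_pi hβpos.le (by linarith [hφ.2]) hφ.1
      have h1' : Real.cos φ ≤ a / l := h1.trans hcba
      have h2 := (le_div_iff₀ hl).1 h1'
      have h3 : Real.sin β ≤ Real.sin φ :=
        Real.sin_le_sin_of_le_of_le_pi_div_two (by linarith) hφ.2 hφ.1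
      have h3' : b / l ≤ Real.sin φ := hsinβ ▸ h3
      have h4 := (div_le_iff₀ hl).1 h3'
      simp only
      rw [abs_of_nonneg h0, min_eq_right (by linarith), min_eq_left (by linarith)]
      ring
  have hP4 : (∫ φ in (π/2)..(π - β), min a (l * |Real.cos φ|) * min b (l * Real.sin φ))
      = b * l * (1 - Real.sin β) := by
    have hle : π / 2 ≤ π - β := by linarith
    rw [integral_congr (g := fun φ => (b * l) * -Real.cos φ)]
    · simp only [intervalIntegral.integral_const_mul]
      rw [intervalIntegral.integral_neg, integral_cos, Real.sin_pi_div_two, Real.sin_pi_sub]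
      ring
    · intro φ hφ
      rw [Set.uIcc_of_le hle] at hφ
      have h0 : Real.cos φ ≤ 0 := by
        have := Real.cos_le_cos_of_nonneg_of_le_pi (by positivity) (by linarith [hφ.2]) hφ.1
        simpa using this
      have h1 : Real.cos (π - β) ≤ Real.cos φ :=
        Real.cos_le_cos_of_nonneg_of_le_pi (by linarith [hφ.1]) (by linarith) hφ.2
      rw [Real.cos_pi_sub] at h1
      have h1' : -Real.cos φ ≤ a / l := by
        have : -Real.cos φ ≤ Real.cos β := by linarith
        linarith [hcba]
      have h2 := (le_div_iff₀ hl).1 h1'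
      have h3 : Real.sin β ≤ Real.sin φ := by
        rw [← Real.sin_pi_sub φ]
        exact Real.sin_le_sin_of_le_of_le_pi_div_two (by linarith) (by linarith [hφ.1])
          (by linarith [hφ.2])
      have h3' : b / l ≤ Real.sin φ := hsinβ ▸ h3
      have h4 := (div_le_iff₀ hl).1 h3'
      simp only
      rw [abs_of_nonpos h0, min_eq_right (by linarith), min_eq_left (by linarith)]
      ring
  have hP5 : (∫ φ in (π - β)..(π - α), min a (l * |Real.cos φ|) * min b (l * Real.sin φ))
      = l ^ 2 * ((Real.sin β ^ 2 - Real.sin α ^ 2) / 2) := by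
    have hle : π - β ≤ π - α := by linarith
    rw [integral_congr (g := fun φ => l ^ 2 * -(Real.sin φ * Real.cos φ))]
    · simp only [intervalIntegral.integral_const_mul]
      rw [intervalIntegral.integral_neg, integral_sin_mul_cos₁, Real.sin_pi_sub,
        Real.sin_pi_sub]
      ring
    · intro φ hφ
      rw [Set.uIcc_of_le hle] at hφ
      have h0 : Real.cos φ ≤ 0 := by
        have := Real.cos_le_cos_of_nonneg_of_le_pi (x := π/2) (y := φ) (by positivity)
          (by linarith [hφ.2]) (by linarith [hφ.1])
        simpa using this
      have h1 : Real.cos (π - α) ≤ Real.cos φ :=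
        Real.cos_le_cos_of_nonneg_of_le_pi (by linarith [hφ.1]) (by linarith) hφ.2
      rw [Real.cos_pi_sub, hcosα] at h1
      have h2 := (le_div_iff₀ hl).1 (by linarith : -Real.cos φ ≤ a / l)
      have h3 : Real.sin φ ≤ Real.sin β := by
        rw [← Real.sin_pi_sub φ]
        exact Real.sin_le_sin_of_le_of_le_pi_div_two (by linarith [hφ.2]) hβlt.le
          (by linarith [hφ.1])
      have h3' : Real.sin φ ≤ b / l := hsinβ ▸ h3
      have h4 := (le_div_iff₀ hl).1 h3'
      simp only
      rw [abs_of_nonpos h0, min_eq_right (by linarith), min_eq_right (by linarith)]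
      ring
  have hP6 : (∫ φ in (π - α)..π, min a (l * |Real.cos φ|) * min b (l * Real.sin φ))
      = a * l * (1 - Real.cos α) := by
    rw [integral_congr (g := fun φ => (a * l) * Real.sin φ)]
    · rw [intervalIntegral.integral_const_mul, integral_sin, Real.cos_pi_sub, Real.cos_pi]; ring
    · intro φ hφ
      rw [Set.uIcc_of_le (by linarith : π - α ≤ π)] at hφ
      have h1 : Real.cos φ ≤ Real.cos (π - α) :=
        Real.cos_le_cos_of_nonneg_of_le_pi (by linarith) hφ.2 hφ.1
      rw [Real.cos_pi_sub, hcosα] at h1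
      have h0 : Real.cos φ ≤ 0 := by linarith
      have h2 := (div_le_iff₀ hl).1 (le_neg.1 h1)
      have h3 : Real.sin φ ≤ Real.sin α := by
        rw [← Real.sin_pi_sub φ]
        exact Real.sin_le_sin_of_le_of_le_pi_div_two (by linarith [hφ.2]) hαlt.le
          (by linarith [hφ.1])
      have h3' : Real.sin φ ≤ b / l := h3.trans hsab
      have h4 := (le_div_iff₀ hl).1 h3'
      simp only
      rw [abs_of_nonpos h0, min_eq_left (by linarith), min_eq_right (by linarith)]
      ring
  rw [hsplit, hP1, hP2, hP3, hP4, hP5, hP6, hcosα, hsinβ, hsinα_sq]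
  field_simp
  ring

theorem stmt11 (l σ a b : ℝ) (hσ : 0 < σ) (hσb : σ < b) (hba : b ≤ a)
    (hal : a - σ < l) (hlL : l ≤ Real.sqrt ((a - σ) ^ 2 + (b - σ) ^ 2)) :
    P2sc l σ a b
      = 1 / π * ((Real.sqrt ((a - σ) ^ 2 + (b - σ) ^ 2) ^ 2 + l ^ 2) / (a * b))
      - 2 / π * (((b - σ) / b) * (l / a) * Real.sqrt (1 - (a - σ) ^ 2 / l ^ 2)
        + ((a - σ) / a) * (l / b) * Real.sqrt (1 - (b - σ) ^ 2 / l ^ 2))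
      + 2 / π * ((a - σ) / a) * ((b - σ) / b)
        * (π - Real.arcsin ((a - σ) / l) - Real.arcsin ((b - σ) / l))
      + (σ / a + σ / b - σ ^ 2 / (a * b)) := by
  have hb' : 0 < b - σ := by linarith
  have ha' : 0 < a - σ := by linarith
  have hba' : b - σ ≤ a - σ := by linarith
  have hl : 0 < l := ha'.trans hal
  have hbl : b - σ < l := lt_of_le_of_lt hba' hal
  have hS : (0:ℝ) ≤ (a - σ) ^ 2 + (b - σ) ^ 2 := by positivity
  have hl2 : l ^ 2 ≤ (a - σ) ^ 2 + (b - σ) ^ 2 := by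
    have := Real.sq_sqrt hS
    nlinarith [hlL, Real.sqrt_nonneg ((a - σ) ^ 2 + (b - σ) ^ 2)]
  have hA := A2_val ha' hal
  have hB := B2_val hb' hbl
  have hAB := AB2_val hb' hba' hal hl2
  have hπ : (0:ℝ) < π := Real.pi_pos
  have ha0 : 0 < a := by linarith
  have hb0 : 0 < b := by linarith
  have hsq : Real.sqrt ((a - σ) ^ 2 + (b - σ) ^ 2) ^ 2 = (a - σ) ^ 2 + (b - σ) ^ 2 :=
    Real.sq_sqrt hS
  have hs1 : Real.sqrt (1 - (a - σ) ^ 2 / l ^ 2) = Real.sqrt (l ^ 2 - (a - σ) ^ 2) / l := by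
    rw [show (1:ℝ) - (a - σ) ^ 2 / l ^ 2 = (l ^ 2 - (a - σ) ^ 2) / l ^ 2 by field_simp,
      Real.sqrt_div (by nlinarith) (l ^ 2), Real.sqrt_sq hl.le]
  have hs2 : Real.sqrt (1 - (b - σ) ^ 2 / l ^ 2) = Real.sqrt (l ^ 2 - (b - σ) ^ 2) / l := by
    rw [show (1:ℝ) - (b - σ) ^ 2 / l ^ 2 = (l ^ 2 - (b - σ) ^ 2) / l ^ 2 by field_simp,
      Real.sqrt_div (by nlinarith) (l ^ 2), Real.sqrt_sq hl.le]
  rw [P2sc, hA, hB, hAB, hsq, hs1, hs2, Real.arccos_eq_pi_div_two_sub_arcsin]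
  field_simp
  ring
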